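/- For every admissible word (ε_1,…,ε_n) with n ≥ 1, the length of the basic interval satisfies β^{−(n+Γ_n+1)} ≤ |I(ε_1,…,ε_n)| ≤ β^{−n}; in particular, for the word (ε*_1,…,ε*_n) one has the sharper bounds β^{−(n+t_n+1)} ≤ |I(ε*_1,…,ε*_n)| ≤ β^{−(n+t_n)}. -/

import Mathlib

open MeasureTheory Filter Set

noncomputable section

/-- The β-transformation on `(0,1]`: `T_β x = βx − ⌈βx⌉ + 1`. -/
def Tbeta (β x : ℝ) : ℝ := β * x - ⌈β * x⌉ + 1

/-- The digits of the β-expansion, 0-indexed: `eps β x n` is the `(n+1)`-st digit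
`ε_{n+1}(x,β) = ⌈β T_β^n x⌉ − 1`. -/
def eps (β x : ℝ) (n : ℕ) : ℤ := ⌈β * (Tbeta β)^[n] x⌉ - 1

/-- The basic interval of order `n` containing `x`:
all `y ∈ (0,1]` whose first `n` digits agree with those of `x`. -/
def In (β x : ℝ) (n : ℕ) : Set ℝ := {y ∈ Ioc (0:ℝ) 1 | ∀ j < n, eps β y j = eps β x j}

/-- The length of a set (Lebesgue measure). -/
def len (s : Set ℝ) : ℝ := (volume s).toReal

/-- `tseq β n = t_n`: the maximal length of the block of zero digits of the
β-expansion of `1` immediately following position `n` (digits `ε*_{n+1},…,ε*_{n+k}`). -/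
def tseq (β : ℝ) (n : ℕ) : ℕ := sSup {k : ℕ | ∀ j < k, eps β 1 (n + j) = 0}

/-- `Gam β n = Γ_n = max_{1 ≤ k ≤ n} t_k`. -/
def Gam (β : ℝ) (n : ℕ) : ℕ := Finset.sup (Finset.Icc 1 n) (tseq β)

/-- `lam β = λ(β) = limsup_n Γ_n / n`. -/
def lam (β : ℝ) : ℝ := Filter.limsup (fun n : ℕ => (Gam β n : ℝ) / n) atTop

/-- `kstar β x n = k_n^*(x)`: the smallest `k ≥ 0` such that
`(ε_{k+1}(x),…,ε_n(x)) = (ε*_1,…,ε*_{n−k})`. -/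
def kstar (β x : ℝ) (n : ℕ) : ℕ := sInf {k : ℕ | ∀ i < n - k, eps β x (k + i) = eps β 1 i}

/-- `tau β x = τ(x) = limsup_n t_{n − k_n^*(x)} / n`. -/
def tau (β x : ℝ) : ℝ :=
  Filter.limsup (fun n : ℕ => (tseq β (n - kstar β x n) : ℝ) / n) atTop

/-- The upper density `\overline{D}(x) = limsup_n (−log_β |I_n(x)|)/n`. -/
def upperD (β x : ℝ) : ℝ :=
  Filter.limsup (fun n : ℕ => -Real.logb β (len (In β x n)) / n) atTop

/-- The lower density `\underline{D}(x) = liminf_n (−log_β |I_n(x)|)/n`. -/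
def lowerD (β x : ℝ) : ℝ :=
  Filter.liminf (fun n : ℕ => -Real.logb β (len (In β x n)) / n) atTop

/-- The basic interval (cylinder) associated to a finite word `w` of digits:
all `x ∈ (0,1]` whose β-expansion starts with `w`. -/
def cyl (β : ℝ) (w : List ℤ) : Set ℝ :=
  {x ∈ Ioc (0:ℝ) 1 | ∀ j < w.length, eps β x j = w.getD j 0}

/-- A finite word is admissible if it occurs as the initial digits of some `x ∈ (0,1]`. -/
def Admissible (β : ℝ) (w : List ℤ) : Prop := (cyl β w).Nonempty

/-- A basic interval is full if its length is `β^{−n}` where `n` is the order. -/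
def IsFull (β : ℝ) (w : List ℤ) : Prop := len (cyl β w) = β ^ (-(w.length : ℤ))

/-- The word `(ε*_1,…,ε*_n)` of the first `n` digits of the β-expansion of `1`. -/
def estarWord (β : ℝ) (n : ℕ) : List ℤ := (List.range n).map (eps β 1)

/-- The interior of a set relative to the subspace `[0,1]`
(for `S ⊆ [0,1]` this is exactly the interior of `S` in the topology of `[0,1]`). -/
def intIn01 (S : Set ℝ) : Set ℝ := Icc 0 1 \ closure (Icc 0 1 \ S)

lemma Tbeta_mem (β x : ℝ) : Tbeta β x ∈ Ioc (0:ℝ) 1 := by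
  unfold Tbeta
  constructor
  · have := Int.ceil_lt_add_one (β * x); linarith
  · have := Int.le_ceil (β * x); linarith

lemma iter_mem {β x : ℝ} (hx : x ∈ Ioc (0:ℝ) 1) (n : ℕ) : (Tbeta β)^[n] x ∈ Ioc (0:ℝ) 1 := by
  cases n with
  | zero => simpa
  | succ n => rw [Function.iterate_succ_apply']; exact Tbeta_mem ..

lemma eps_nonneg {β x : ℝ} (hβ : 0 < β) (hx : x ∈ Ioc (0:ℝ) 1) (n : ℕ) : 0 ≤ eps β x n := by
  have h := (iter_mem (β:=β) hx n).1
  have : (0:ℝ) < β * (Tbeta β)^[n] x := mul_pos hβ h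
  have := Int.ceil_pos.mpr this
  unfold eps; omega

lemma T_step (β x : ℝ) : Tbeta β x = β * x - (eps β x 0 : ℝ) := by
  unfold Tbeta eps; push_cast; simp; ring

lemma eps_succ (β x : ℝ) (j : ℕ) : eps β x (j+1) = eps β (Tbeta β x) j := by
  unfold eps; rw [Function.iterate_succ_apply]

lemma cyl_cons {β x : ℝ} {e : ℤ} {w : List ℤ} :
    x ∈ cyl β (e :: w) ↔ x ∈ Ioc (0:ℝ) 1 ∧ eps β x 0 = e ∧ Tbeta β x ∈ cyl β w := by
  constructor
  · rintro ⟨hx, hd⟩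
    refine ⟨hx, ?_, Tbeta_mem .., fun j hj => ?_⟩
    · simpa using hd 0 (by simp)
    · rw [← eps_succ]
      simpa using hd (j+1) (by simpa using Nat.succ_lt_succ hj)
  · rintro ⟨hx, h0, hmem, hd⟩
    refine ⟨hx, fun j hj => ?_⟩
    cases j with
    | zero => simpa using h0
    | succ j => rw [eps_succ]; simpa using hd j (by simpa using Nat.lt_of_succ_lt_succ hj)

lemma cyl_nil (β : ℝ) : cyl β [] = Ioc (0:ℝ) 1 := by
  unfold cyl; ext x; simp [Set.mem_Ioc]


lemma TEL {β : ℝ} : ∀ (w : List ℤ) (x y : ℝ), x ∈ cyl β w → y ∈ cyl β w →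
    β ^ w.length * x - (Tbeta β)^[w.length] x = β ^ w.length * y - (Tbeta β)^[w.length] y := by
  intro w
  induction w with
  | nil => intro x y _ _; simp
  | cons e w ih =>
    intro x y hx hy
    rw [cyl_cons] at hx hy
    have hx1 : β * x = (e:ℝ) + Tbeta β x := by
      have := T_step β x; rw [hx.2.1] at this; linarith
    have hy1 : β * y = (e:ℝ) + Tbeta β y := by
      have := T_step β y; rw [hy.2.1] at this; linarith
    have key := ih (Tbeta β x) (Tbeta β y) hx.2.2 hy.2.2
    simp only [List.length_cons, Function.iterate_succ_apply, pow_succ]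
    linear_combination key + β ^ w.length * hx1 - β ^ w.length * hy1

lemma Astar {β : ℝ} (hβ : 1 < β) : ∀ (w : List ℤ) (x t : ℝ), x ∈ cyl β w → 0 < t →
    (∀ j ≤ w.length, (Tbeta β)^[j] x + (t - (Tbeta β)^[w.length] x) / β ^ (w.length - j) ≤ 1) →
    (x + (t - (Tbeta β)^[w.length] x) / β ^ w.length ∈ cyl β w ∧
      (Tbeta β)^[w.length] (x + (t - (Tbeta β)^[w.length] x) / β ^ w.length) = t) := by
  have hβ0 : (0:ℝ) < β := by linarith
  have hβne : β ≠ 0 := ne_of_gt hβ0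
  intro w
  induction w with
  | nil =>
    intro x t hx ht hbd
    have h0 := hbd 0 (by simp)
    simp only [List.length_nil, pow_zero, Function.iterate_zero_apply, div_one,
      Nat.sub_self] at h0 ⊢
    have hy : x + (t - x) = t := by ring
    rw [hy]
    exact ⟨by rw [cyl_nil]; exact ⟨ht, by linarith⟩, rfl⟩
  | cons e w ih =>
    intro x t hx ht hbd
    rw [cyl_cons] at hx
    obtain ⟨hxI, hx0, hxT⟩ := hx
    simp only [List.length_cons, Function.iterate_succ_apply] at hbd ⊢
    set a := (Tbeta β)^[w.length] (Tbeta β x) with ha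
    set y := x + (t - a) / β ^ (w.length + 1) with hydef
    have hbd' : ∀ j ≤ w.length, (Tbeta β)^[j] (Tbeta β x)
        + (t - (Tbeta β)^[w.length] (Tbeta β x)) / β ^ (w.length - j) ≤ 1 := by
      intro j hj
      have h := hbd (j+1) (by omega)
      rw [show w.length + 1 - (j+1) = w.length - j from by omega] at h
      rw [Function.iterate_succ_apply] at h
      exact h
    obtain ⟨hy'mem, hy'T⟩ := ih (Tbeta β x) t hxT ht hbd'
    set y' := Tbeta β x + (t - a) / β ^ w.length with hy'
    have hbx : β * x = (e:ℝ) + Tbeta β x := by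
      have := T_step β x; rw [hx0] at this; linarith
    have hc : β / β ^ (w.length+1) = 1 / β ^ w.length := by
      rw [pow_succ]; field_simp
    have hby : β * y = y' + (e:ℝ) := by
      rw [hydef, hy']
      linear_combination hbx + (t - a) * hc
    have hy'I : y' ∈ Ioc (0:ℝ) 1 := hy'mem.1
    have he0 : 0 ≤ e := by rw [← hx0]; exact eps_nonneg hβ0 hxI 0
    have heR : (0:ℝ) ≤ (e:ℝ) := by exact_mod_cast he0
    have hypos : 0 < y := by
      have h1 : 0 < β * y := by rw [hby]; linarith [hy'I.1]
      rcases mul_pos_iff.mp h1 with h | h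
      · exact h.2
      · linarith [h.1]
    have hyle : y ≤ 1 := by
      have h := hbd 0 (by omega)
      simp only [Function.iterate_zero_apply, Nat.sub_zero] at h
      rw [hydef]; exact h
    have hcy' : ⌈y'⌉ = 1 := by
      have h1 : ⌈y'⌉ ≤ 1 := Int.ceil_le.mpr (by simpa using hy'I.2)
      have h2 : 0 < ⌈y'⌉ := Int.ceil_pos.mpr hy'I.1
      omega
    have hceil : ⌈β * y⌉ = e + 1 := by
      rw [hby, Int.ceil_add_intCast, hcy']; omega
    have hepsy : eps β y 0 = e := by
      unfold eps; simp only [Function.iterate_zero_apply]; rw [hceil]; omega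
    have hTy : Tbeta β y = y' := by
      rw [T_step, hepsy, hby]; push_cast; ring
    constructor
    · rw [cyl_cons]
      exact ⟨⟨hypos, hyle⟩, hepsy, hTy ▸ hy'mem⟩
    · rw [hTy]; exact hy'T


lemma LC {β : ℝ} (hβ : 1 < β) :
    ∀ (n : ℕ) (u : ℝ), ∃ δ > 0, ∀ v, u - δ < v → v ≤ u → ∀ j < n, eps β v j = eps β u j := by
  have hβ0 : (0:ℝ) < β := by linarith
  intro n
  induction n with
  | zero => intro u; exact ⟨1, one_pos, fun v _ _ j hj => absurd hj (Nat.not_lt_zero j)⟩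
  | succ n ih =>
    intro u
    obtain ⟨δ', hδ', hδ'p⟩ := ih (Tbeta β u)
    have hTu : 0 < Tbeta β u := (Tbeta_mem β u).1
    refine ⟨min (Tbeta β u / β) (δ' / β), lt_min (by positivity) (by positivity), ?_⟩
    intro v hv1 hv2 j hj
    have hv1' : u - Tbeta β u / β < v := lt_of_le_of_lt (sub_le_sub_left (min_le_left _ _) u) hv1
    have hv1'' : u - δ' / β < v := lt_of_le_of_lt (sub_le_sub_left (min_le_right _ _) u) hv1
    -- ceilings agree
    have hc1 : (⌈β * u⌉ : ℝ) - 1 < β * v := by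
      have : β * (u - Tbeta β u / β) < β * v := by
        apply mul_lt_mul_of_pos_left hv1' hβ0
      have he : β * (u - Tbeta β u / β) = β * u - Tbeta β u := by field_simp
      rw [he] at this
      unfold Tbeta at this
      linarith
    have hc2 : β * v ≤ β * u := mul_le_mul_of_nonneg_left hv2 (le_of_lt hβ0)
    have hceil : ⌈β * v⌉ = ⌈β * u⌉ := by
      have h1 : ⌈β * v⌉ ≤ ⌈β * u⌉ := Int.ceil_le.mpr (hc2.trans (Int.le_ceil _))
      have h2 : (⌈β * u⌉ : ℝ) - 1 < (⌈β * v⌉ : ℝ) := lt_of_lt_of_le hc1 (Int.le_ceil _)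
      have h2' : ⌈β * u⌉ - 1 < ⌈β * v⌉ := by exact_mod_cast h2
      omega
    cases j with
    | zero =>
      unfold eps
      simp only [Function.iterate_zero_apply]
      rw [hceil]
    | succ j =>
      have hTdiff : Tbeta β u - Tbeta β v = β * (u - v) := by
        unfold Tbeta; rw [hceil]; ring
      have hd1 : Tbeta β u - δ' < Tbeta β v := by
        have : β * (u - v) < β * (δ' / β) := by
          apply mul_lt_mul_of_pos_left _ hβ0
          linarith
        rw [mul_div_cancel₀ _ (ne_of_gt hβ0)] at this
        linarith
      have hd2 : Tbeta β v ≤ Tbeta β u := by nlinarith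
      rw [eps_succ, eps_succ]
      exact hδ'p (Tbeta β v) hd1 hd2 j (Nat.lt_of_succ_lt_succ hj)

lemma max_mem {β : ℝ} (hβ : 1 < β) {w : List ℤ} (hadm : (cyl β w).Nonempty) :
    ∃ x ∈ cyl β w, ∀ y ∈ cyl β w, y ≤ x := by
  have hbdd : BddAbove (cyl β w) := ⟨1, fun y hy => hy.1.2⟩
  set s := sSup (cyl β w) with hs
  have hle : ∀ y ∈ cyl β w, y ≤ s := fun y hy => le_csSup hbdd hy
  have hne := hadm
  obtain ⟨x0, hx0⟩ := hne
  have hsI : s ∈ Ioc (0:ℝ) 1 := by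
    constructor
    · exact lt_of_lt_of_le hx0.1.1 (hle x0 hx0)
    · exact csSup_le hadm (fun y hy => hy.1.2)
  obtain ⟨δ, hδ, hδp⟩ := LC hβ w.length s
  obtain ⟨x, hx, hxs⟩ := exists_lt_of_lt_csSup hadm (by linarith : s - δ < s)
  refine ⟨s, ⟨hsI, fun j hj => ?_⟩, hle⟩
  rw [← hδp x hxs (hle x hx) j hj]
  exact hx.2 j hj


lemma one_mem_Ioc : (1:ℝ) ∈ Ioc (0:ℝ) 1 := ⟨one_pos, le_refl 1⟩

lemma Tpow {β : ℝ} (m k : ℕ) (h : ∀ j < k, eps β 1 (m + j) = 0) :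
    (Tbeta β)^[m + k] 1 = β ^ k * (Tbeta β)^[m] 1 := by
  induction k with
  | zero => simp
  | succ k ih =>
    have hk := ih (fun j hj => h j (by omega))
    have h0 : eps β 1 (m + k) = 0 := h k (by omega)
    have hceil : ⌈β * (Tbeta β)^[m+k] 1⌉ = 1 := by
      unfold eps at h0; omega
    have : (Tbeta β)^[m + (k+1)] 1 = Tbeta β ((Tbeta β)^[m+k] 1) := by
      rw [show m + (k+1) = (m+k) + 1 from by omega, Function.iterate_succ_apply']
    rw [hk] at hceil
    rw [this, hk]
    set u := (Tbeta β)^[m] 1 with hu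
    show β * (β ^ k * u) - ⌈β * (β ^ k * u)⌉ + 1 = β ^ (k+1) * u
    rw [hceil]
    push_cast
    ring

lemma tseq_bddAbove {β : ℝ} (hβ : 1 < β) (m : ℕ) :
    BddAbove {k : ℕ | ∀ j < k, eps β 1 (m + j) = 0} := by
  have hT := iter_mem (β := β) one_mem_Ioc m
  have hTpos : 0 < (Tbeta β)^[m] 1 := hT.1
  obtain ⟨K, hK⟩ := pow_unbounded_of_one_lt ((Tbeta β)^[m] 1)⁻¹ hβ
  refine ⟨K, fun k hk => ?_⟩
  by_contra hlt
  push_neg at hlt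
  have h1 : β ^ k * (Tbeta β)^[m] 1 ≤ 1 := by
    rw [← Tpow m k hk]
    exact (iter_mem one_mem_Ioc (m + k)).2
  have h2 : β ^ K ≤ β ^ k := pow_le_pow_right₀ (le_of_lt (by linarith)) (le_of_lt hlt)
  have h4 : 1 < β ^ K * (Tbeta β)^[m] 1 := by
    have := mul_lt_mul_of_pos_right hK hTpos
    rwa [inv_mul_cancel₀ (ne_of_gt hTpos)] at this
  have h5 : β ^ K * (Tbeta β)^[m] 1 ≤ β ^ k * (Tbeta β)^[m] 1 :=
    mul_le_mul_of_nonneg_right h2 hTpos.le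
  linarith
lemma tseq_mem {β : ℝ} (hβ : 1 < β) (m : ℕ) :
    ∀ j < tseq β m, eps β 1 (m + j) = 0 := by
  have h0 : (0:ℕ) ∈ {k : ℕ | ∀ j < k, eps β 1 (m + j) = 0} :=
    fun j hj => absurd hj (Nat.not_lt_zero j)
  have := Nat.sSup_mem ⟨0, h0⟩ (tseq_bddAbove hβ m)
  exact this

lemma tseq_next {β : ℝ} (hβ : 1 < β) (m : ℕ) : 1 ≤ eps β 1 (m + tseq β m) := by
  have hnn : 0 ≤ eps β 1 (m + tseq β m) := eps_nonneg (by linarith) one_mem_Ioc _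
  rcases eq_or_lt_of_le hnn with h | h
  · exfalso
    have hmem : tseq β m + 1 ∈ {k : ℕ | ∀ j < k, eps β 1 (m + j) = 0} := by
      intro j hj
      rcases Nat.lt_succ_iff_lt_or_eq.mp hj with h' | h'
      · exact tseq_mem hβ m j h'
      · rw [h']; omega
    have h2 : tseq β m + 1 ≤ tseq β m := le_csSup (tseq_bddAbove hβ m) hmem
    omega
  · omega

lemma key1 {β : ℝ} (hβ : 1 < β) (m : ℕ) :
    β ^ (tseq β m) * (Tbeta β)^[m] 1 ≤ 1 := by
  rw [← Tpow m (tseq β m) (tseq_mem hβ m)]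
  exact (iter_mem one_mem_Ioc _).2

lemma key2 {β : ℝ} (hβ : 1 < β) (m : ℕ) :
    1 < β ^ (tseq β m + 1) * (Tbeta β)^[m] 1 := by
  have h := tseq_next hβ m
  have hceil : 2 ≤ ⌈β * (Tbeta β)^[m + tseq β m] 1⌉ := by unfold eps at h; omega
  have hgt : 1 < β * (Tbeta β)^[m + tseq β m] 1 := by
    have h1 := Int.ceil_lt_add_one (β * (Tbeta β)^[m + tseq β m] 1)
    have h2 : (2:ℝ) ≤ (⌈β * (Tbeta β)^[m + tseq β m] 1⌉ : ℝ) := by exact_mod_cast hceil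
    linarith
  rw [Tpow m (tseq β m) (tseq_mem hβ m)] at hgt
  rw [pow_succ]
  nlinarith


lemma cyl_subset_Ioc (β : ℝ) (w : List ℤ) : cyl β w ⊆ Ioc (0:ℝ) 1 := fun _ h => h.1

lemma len_le_of_subset {s : Set ℝ} {a b : ℝ} (hab : a ≤ b) (h : s ⊆ Icc a b) :
    len s ≤ b - a := by
  have h1 : volume s ≤ volume (Icc a b) := measure_mono h
  rw [Real.volume_Icc] at h1
  calc len s ≤ (ENNReal.ofReal (b - a)).toReal :=
        ENNReal.toReal_mono ENNReal.ofReal_ne_top h1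
    _ = b - a := ENNReal.toReal_ofReal (by linarith)

lemma le_len_of_Ioc {s : Set ℝ} {a b : ℝ} (hab : a ≤ b) (hs : s ⊆ Ioc (0:ℝ) 1)
    (h : Ioc a b ⊆ s) : b - a ≤ len s := by
  have htop : volume s ≠ ⊤ := by
    apply lt_top_iff_ne_top.mp
    calc volume s ≤ volume (Ioc (0:ℝ) 1) := measure_mono hs
      _ < ⊤ := by rw [Real.volume_Ioc]; exact ENNReal.ofReal_lt_top
  have h1 : volume (Ioc a b) ≤ volume s := measure_mono h
  rw [Real.volume_Ioc] at h1
  calc b - a = (ENNReal.ofReal (b - a)).toReal := (ENNReal.toReal_ofReal (by linarith)).symm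
    _ ≤ len s := ENNReal.toReal_mono htop h1

lemma estar_length (β : ℝ) (n : ℕ) : (estarWord β n).length = n := by
  unfold estarWord; simp

lemma one_mem_estar (β : ℝ) (n : ℕ) : (1:ℝ) ∈ cyl β (estarWord β n) := by
  refine ⟨⟨one_pos, le_refl 1⟩, fun j hj => ?_⟩
  rw [estar_length] at hj
  unfold estarWord
  rw [List.getD_eq_getElem _ _ (by simpa using hj)]
  simp

lemma Ioc_subset_cyl {β : ℝ} (hβ : 1 < β) {w : List ℤ} {x : ℝ} (hx : x ∈ cyl β w) :
    Ioc (x - (Tbeta β)^[w.length] x / β ^ w.length) x ⊆ cyl β w := by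
  have hβ0 : (0:ℝ) < β := by linarith
  have hbn : (0:ℝ) < β ^ w.length := by positivity
  intro z hz
  set n := w.length with hn
  set a := (Tbeta β)^[n] x with ha
  have haI : a ∈ Ioc (0:ℝ) 1 := iter_mem hx.1 n
  set t := a + β ^ n * (z - x) with htdef
  have ht : 0 < t := by
    have h1 : -(a / β ^ n) < z - x := by linarith [hz.1]
    have h2 : β ^ n * (-(a / β ^ n)) < β ^ n * (z - x) := mul_lt_mul_of_pos_left h1 hbn
    have h3 : β ^ n * (-(a / β ^ n)) = -a := by field_simp
    rw [h3] at h2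
    rw [htdef]
    linarith
  have hta : t - a ≤ 0 := by nlinarith [hz.2]
  have hbd : ∀ j ≤ n, (Tbeta β)^[j] x + (t - a) / β ^ (n - j) ≤ 1 := by
    intro j hj
    have h1 : (Tbeta β)^[j] x ≤ 1 := (iter_mem hx.1 j).2
    have h2 : (t - a) / β ^ (n - j) ≤ 0 :=
      div_nonpos_of_nonpos_of_nonneg hta (by positivity)
    linarith
  have := Astar hβ w x t hx ht hbd
  have hyz : x + (t - a) / β ^ n = z := by
    rw [htdef]
    field_simp
    try ring
  rw [hyz] at this
  exact this.1

lemma cyl_subset_Icc {β : ℝ} (hβ : 1 < β) {w : List ℤ} {x : ℝ} (hx : x ∈ cyl β w) :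
    cyl β w ⊆ Icc (x - (Tbeta β)^[w.length] x / β ^ w.length)
      (x - (Tbeta β)^[w.length] x / β ^ w.length + 1 / β ^ w.length) := by
  have hβ0 : (0:ℝ) < β := lt_trans one_pos hβ
  have hb : (0:ℝ) < β ^ w.length := by positivity
  intro y hy
  have h := TEL w x y hx hy
  have hyT := iter_mem (β := β) hy.1 w.length
  have e1 : y = x - (Tbeta β)^[w.length] x / β ^ w.length
      + (Tbeta β)^[w.length] y / β ^ w.length := by
    field_simp
    linarith [h]
  have h2 : 0 < (Tbeta β)^[w.length] y / β ^ w.length := div_pos hyT.1 hb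
  have h3 : (Tbeta β)^[w.length] y / β ^ w.length ≤ 1 / β ^ w.length := by
    gcongr
    exact hyT.2
  constructor
  · linarith
  · linarith


/-- For every admissible word `(ε_1,…,ε_n)` with `n ≥ 1`,
`β^{−(n+Γ_n+1)} ≤ |I(ε_1,…,ε_n)| ≤ β^{−n}`; in particular for the word `(ε*_1,…,ε*_n)`
one has the sharper bounds `β^{−(n+t_n+1)} ≤ |I(ε*_1,…,ε*_n)| ≤ β^{−(n+t_n)}`. -/
theorem len_cyl_bounds (β : ℝ) (hβ : 1 < β) (w : List ℤ)
    (hn : 1 ≤ w.length) (hadm : Admissible β w) :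
    (β ^ (-((w.length : ℤ) + (Gam β w.length : ℤ) + 1)) ≤ len (cyl β w) ∧
        len (cyl β w) ≤ β ^ (-(w.length : ℤ))) ∧
      (β ^ (-((w.length : ℤ) + (tseq β w.length : ℤ) + 1))
          ≤ len (cyl β (estarWord β w.length)) ∧
        len (cyl β (estarWord β w.length))
          ≤ β ^ (-((w.length : ℤ) + (tseq β w.length : ℤ)))) := by
  have hβ0 : (0:ℝ) < β := lt_trans one_pos hβ
  have hβ1 : (1:ℝ) ≤ β := hβ.le
  set n := w.length with hn'
  have hb : (0:ℝ) < β ^ n := by positivity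
  have hz : ∀ k : ℕ, (β:ℝ) ^ (-(k:ℤ)) = 1 / β ^ k := by
    intro k; rw [zpow_neg, zpow_natCast, one_div]
  obtain ⟨xm, hxm, hmax⟩ := max_mem hβ hadm
  set A := (Tbeta β)^[n] xm with hA
  have hAI : A ∈ Ioc (0:ℝ) 1 := iter_mem hxm.1 n
  -- general upper bound
  have hub : len (cyl β w) ≤ 1 / β ^ n := by
    have h := len_le_of_subset (a := xm - A / β ^ n) (b := xm - A / β ^ n + 1 / β ^ n)
      (by have := one_div_pos.mpr hb; linarith) (cyl_subset_Icc hβ hxm)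
    linarith
  -- general lower bound
  have hlb : A / β ^ n ≤ len (cyl β w) := by
    have hpos : 0 ≤ A / β ^ n := le_of_lt (div_pos hAI.1 hb)
    have h := le_len_of_Ioc (a := xm - A / β ^ n) (b := xm) (by linarith)
      (cyl_subset_Ioc β w) (Ioc_subset_cyl hβ hxm)
    linarith
  -- key bound on A via Gamma
  have hAbound : 1 < β ^ (Gam β n + 1) * A := by
    by_cases hj : ∃ j < n, (Tbeta β)^[j] xm = 1
    · obtain ⟨j, hjn, hj1⟩ := hj
      have hm1 : 1 ≤ n - j := by omega
      have hmn : n - j ≤ n := by omega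
      have hnm : n = (n - j) + j := by omega
      have hAm : A = (Tbeta β)^[n - j] 1 := by
        rw [hA, ← hj1, ← Function.iterate_add_apply]
        congr 1
      have h2 := key2 hβ (n - j)
      rw [← hAm] at h2
      have htm : tseq β (n - j) ≤ Gam β n :=
        Finset.le_sup (Finset.mem_Icc.mpr ⟨hm1, hmn⟩)
      have hple : β ^ (tseq β (n - j) + 1) ≤ β ^ (Gam β n + 1) :=
        pow_le_pow_right₀ hβ1 (by omega)
      have hmul := mul_le_mul_of_nonneg_right hple hAI.1.le
      linarith
    · push_neg at hj
      have hsm : ∀ j < n, (Tbeta β)^[j] xm < 1 := fun j hjn =>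
        lt_of_le_of_ne (iter_mem hxm.1 j).2 (hj j hjn)
      have hA1 : A = 1 := by
        by_contra hA1
        have hAlt : A < 1 := lt_of_le_of_ne hAI.2 hA1
        have hne : (Finset.range (n+1)).Nonempty := ⟨0, by simp⟩
        set ε := Finset.inf' (Finset.range (n+1)) hne
          (fun j => 1 - (Tbeta β)^[j] xm) with hε
        have hεpos : 0 < ε := by
          rw [hε, Finset.lt_inf'_iff]
          intro j hjmem
          have hjn : j ≤ n := by
            simpa [Nat.lt_succ_iff] using hjmem
          rcases lt_or_eq_of_le hjn with h' | h'
          · simp only [sub_pos]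
            exact hsm j h'
          · subst h'
            simp only [sub_pos]
            rw [← hA]
            exact hAlt
        have hbd : ∀ j ≤ n, (Tbeta β)^[j] xm + ((A + ε) - (Tbeta β)^[n] xm) / β ^ (n - j) ≤ 1 := by
          intro j hjn
          rw [← hA]
          have hone : (1:ℝ) ≤ β ^ (n - j) := one_le_pow₀ hβ1
          have h1 : ε / β ^ (n - j) ≤ ε := div_le_self hεpos.le hone
          have h2 : ε ≤ 1 - (Tbeta β)^[j] xm := by
            rw [hε]
            exact Finset.inf'_le _ (by simp; omega)
          simp only [add_sub_cancel_left]
          linarith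
        have hres := Astar hβ w xm (A + ε) hxm (by linarith [hAI.1]) hbd
        have hy := hres.1
        have hle := hmax _ hy
        rw [← hA] at hle
        simp only [add_sub_cancel_left] at hle
        have hpos : 0 < ε / β ^ n := div_pos hεpos hb
        linarith
      rw [hA1, mul_one]
      exact one_lt_pow₀ hβ (Nat.succ_ne_zero _)
  -- part 1 lower
  have goal1 : β ^ (-((n:ℤ) + (Gam β n : ℤ) + 1)) ≤ len (cyl β w) := by
    have hcast : -((n:ℤ) + (Gam β n : ℤ) + 1) = -(((n + Gam β n + 1 : ℕ)):ℤ) := by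
      push_cast; ring
    rw [hcast, hz]
    have h6 : 1 / β ^ (n + Gam β n + 1) ≤ A / β ^ n := by
      rw [div_le_div_iff₀ (by positivity) hb]
      rw [show n + Gam β n + 1 = (Gam β n + 1) + n from by omega, pow_add]
      have hbn2 : (0:ℝ) < β ^ n := hb
      nlinarith [hAbound, hb]
    linarith
  have goal2 : len (cyl β w) ≤ β ^ (-(n:ℤ)) := by
    rw [hz n]; exact hub
  -- PART 2
  set B := (Tbeta β)^[n] 1 with hB
  have hBI : B ∈ Ioc (0:ℝ) 1 := iter_mem one_mem_Ioc n
  have h1mem := one_mem_estar β n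
  have hlen' : (estarWord β n).length = n := estar_length β n
  have hmono := Ioc_subset_cyl hβ h1mem
  rw [hlen'] at hmono
  rw [← hB] at hmono
  have hlb2 : B / β ^ n ≤ len (cyl β (estarWord β n)) := by
    have hpos : 0 ≤ B / β ^ n := le_of_lt (div_pos hBI.1 hb)
    have h := le_len_of_Ioc (a := 1 - B / β ^ n) (b := 1) (by linarith)
      (cyl_subset_Ioc β _) hmono
    linarith
  have hsub2 : cyl β (estarWord β n) ⊆ Icc (1 - B / β ^ n) 1 := by
    intro y hy
    have h := TEL (estarWord β n) 1 y h1mem hy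
    rw [hlen', ← hB] at h
    have hyT := iter_mem (β := β) hy.1 n
    have e1 : y = 1 - B / β ^ n + (Tbeta β)^[n] y / β ^ n := by
      field_simp
      linarith [h]
    have h2 : 0 < (Tbeta β)^[n] y / β ^ n := div_pos hyT.1 hb
    exact ⟨by linarith, hy.1.2⟩
  have hub2 : len (cyl β (estarWord β n)) ≤ B / β ^ n := by
    have hpos : 0 ≤ B / β ^ n := le_of_lt (div_pos hBI.1 hb)
    have h := len_le_of_subset (a := 1 - B / β ^ n) (b := 1) (by linarith) hsub2
    linarith
  have hk1 := key1 hβ n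
  have hk2 := key2 hβ n
  rw [← hB] at hk1 hk2
  have goal3 : β ^ (-((n:ℤ) + (tseq β n : ℤ) + 1)) ≤ len (cyl β (estarWord β n)) := by
    have hcast : -((n:ℤ) + (tseq β n : ℤ) + 1) = -(((n + tseq β n + 1 : ℕ)):ℤ) := by
      push_cast; ring
    rw [hcast, hz]
    have h6 : 1 / β ^ (n + tseq β n + 1) ≤ B / β ^ n := by
      rw [div_le_div_iff₀ (by positivity) hb]
      rw [show n + tseq β n + 1 = (tseq β n + 1) + n from by omega, pow_add]
      nlinarith [hk2, hb]
    linarith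
  have goal4 : len (cyl β (estarWord β n)) ≤ β ^ (-((n:ℤ) + (tseq β n : ℤ))) := by
    have hcast : -((n:ℤ) + (tseq β n : ℤ)) = -(((n + tseq β n : ℕ)):ℤ) := by
      push_cast; ring
    rw [hcast, hz]
    have h6 : B / β ^ n ≤ 1 / β ^ (n + tseq β n) := by
      rw [div_le_div_iff₀ hb (by positivity)]
      rw [show n + tseq β n = tseq β n + n from by omega, pow_add]
      nlinarith [hk1, hb, hBI.1]
    linarith
  exact ⟨⟨goal1, goal2⟩, ⟨goal3, goal4⟩⟩
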